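/- Let S ≥ 3 be odd, and define H_t as above (H_{2l}: neighbors (x ± 2^l, y), (x, y ± 2^l); H_{2l+1}: neighbors (x ± 2^l, y ± 2^l), all mod S). If 2^t ≡ 1 (mod S) or 2^t ≡ -1 (mod S), then H_{2t} = H_0. If 2^t is congruent to neither 1 nor -1 mod S, then H_{2t} ≠ H_0. -/

import Mathlib

set_option maxHeartbeats 1000000


/-- The graph `H_{2l}` on `(ZMod S) × (ZMod S)`: `(x,y)` is adjacent to
`(x ± 2^l, y)` and `(x, y ± 2^l)` (mod `S`). -/
def Heven (S l : ℕ) : SimpleGraph (ZMod S × ZMod S) :=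
  SimpleGraph.fromRel (fun u v => v = (u.1 + 2 ^ l, u.2) ∨ v = (u.1, u.2 + 2 ^ l))

theorem stmt_7 (S : ℕ) (hS : 3 ≤ S) (hodd : Odd S) (t : ℕ) :
    ((2 ^ t ≡ 1 [MOD S] ∨ 2 ^ t ≡ S - 1 [MOD S]) → Heven S t = Heven S 0) ∧
    (¬ (2 ^ t ≡ 1 [MOD S]) → ¬ (2 ^ t ≡ S - 1 [MOD S]) → Heven S t ≠ Heven S 0) := by
  haveI : Fact (1 < S) := ⟨by omega⟩
  haveI : NeZero S := ⟨by omega⟩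
  have hS1 : ((S - 1 : ℕ) : ZMod S) = -1 := by
    have h : ((S - 1 : ℕ) : ZMod S) = (S : ZMod S) - 1 := by
      rw [Nat.cast_sub (by omega : 1 ≤ S)]; simp
    simp [h]
  have hiff1 : (2 ^ t ≡ 1 [MOD S]) ↔ ((2:ZMod S)^t = 1) := by
    rw [← ZMod.natCast_eq_natCast_iff]; push_cast; simp
  have hiffm : (2 ^ t ≡ S - 1 [MOD S]) ↔ ((2:ZMod S)^t = -1) := by
    rw [← ZMod.natCast_eq_natCast_iff, hS1]; push_cast; simp
  constructor
  · rintro (h | h)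
    · have hc : (2:ZMod S)^t = 1 := hiff1.1 h
      ext u v
      simp only [Heven, SimpleGraph.fromRel_adj, hc, pow_zero]
    · have hc : (2:ZMod S)^t = -1 := hiffm.1 h
      have key : ∀ a b : ZMod S, a = b + -1 ↔ b = a + 1 := by
        intro a b; constructor <;> intro h <;> subst h <;> ring
      ext u v
      simp only [Heven, SimpleGraph.fromRel_adj, hc, pow_zero, Prod.ext_iff, key]
      tauto
  · intro h1 hm heq
    have hc1 : (2:ZMod S)^t ≠ 1 := fun h => h1 (hiff1.2 h)
    have hcm : (2:ZMod S)^t ≠ -1 := fun h => hm (hiffm.2 h)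
    have hc0 : (2:ZMod S)^t ≠ 0 := by
      have hu : IsUnit (2 : ZMod S) := by
        refine (ZMod.isUnit_prime_iff_not_dvd (n := S) Nat.prime_two).2 fun hdvd => (Nat.not_even_iff_odd.2 hodd) (even_iff_two_dvd.2 hdvd)
      exact (hu.pow t).ne_zero
    have hA : (Heven S t).Adj (0,0) ((2:ZMod S)^t, 0) := by
      simp [Heven, SimpleGraph.fromRel_adj, Prod.ext_iff, hc0, Ne.symm hc0]
    rw [heq] at hA
    simp only [Heven, SimpleGraph.fromRel_adj, pow_zero, Prod.ext_iff] at hA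
    obtain ⟨hne, hA⟩ := hA
    have h01 : (0:ZMod S) ≠ 1 := zero_ne_one
    rcases hA with (⟨h, -⟩ | ⟨-, h⟩) | (⟨h, -⟩ | ⟨-, h⟩)
    · exact hc1 (by simpa using h)
    · exact h01 (by simpa using h)
    · exact hcm (by linear_combination -h)
    · exact h01 (by simpa using h)
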